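/- For every z ∈ E_{2m} with z_1 ≠ 0 there exist indices i, j, k ∈ {1, …, n} such that ∂h_{i j̄}/∂z_k (z) ≠ ∂h_{k j̄}/∂z_i (z) (Wirtinger derivatives); that is, the Wu metric h fails the Kähler symmetry condition at every point of the dense open set E_{2m} \ Z, so the Wu metric on E_{2m} is nowhere Kähler. -/

import Mathlib

open scoped ComplexOrder

noncomputable section

/-- The pseudo-egg `E_{2m} ⊆ ℂ^n`, `n = N + 2`, coordinates indexed by `Fin (N+2)`
with `z 0` playing the role of `z₁`. -/
def E2m (N : ℕ) (m : ℝ) : Set (Fin (N + 2) → ℂ) :=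
  {z | ‖z 0‖ ^ (2 * m) + ∑ j ∈ Finset.Ioi (0 : Fin (N + 2)), ‖z j‖ ^ 2 < 1}

/-- The entries `h_{i j̄}` of the Wu metric of `E_{2m}` (index `0` plays the role of `1`). -/
def hEnt (N : ℕ) (m : ℝ) (z : Fin (N + 2) → ℂ) (i j : Fin (N + 2)) : ℂ :=
  let A : ℝ := 1 - ∑ l ∈ Finset.Ioi (0 : Fin (N + 2)), ‖z l‖ ^ 2
  let B : ℝ := A ^ (1 / m)
  let C : ℝ := (B - ‖z 0‖ ^ 2) ^ 2
  if i = 0 then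
    if j = 0 then ((B / C : ℝ) : ℂ)
    else ((A ^ (-1 + 1 / m) / (m * C) : ℝ) : ℂ) * (starRingEnd ℂ) (z 0) * z j
  else if j = 0 then ((A ^ (-1 + 1 / m) / (m * C) : ℝ) : ℂ) * z 0 * (starRingEnd ℂ) (z i)
  else if i = j then
    ((A ^ (-2 + 1 / m) * ‖z 0‖ ^ 2 * ‖z i‖ ^ 2 / (m ^ 2 * C) +
      (A + ‖z i‖ ^ 2) / (A * (A - ‖z 0‖ ^ (2 * m))) : ℝ) : ℂ)
  else
    ((A ^ (-2 + 1 / m) * ‖z 0‖ ^ 2 / (m ^ 2 * C) : ℝ) : ℂ) *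
        (starRingEnd ℂ) (z i) * z j +
      ((1 / (A * (A - ‖z 0‖ ^ (2 * m))) : ℝ) : ℂ) * (starRingEnd ℂ) (z i) * z j

/-- Wirtinger derivative `∂f/∂z_k = (1/2)(∂f/∂x_k − i ∂f/∂y_k)`. -/
def wirt (N : ℕ) (f : (Fin (N + 2) → ℂ) → ℂ) (z : Fin (N + 2) → ℂ) (k : Fin (N + 2)) : ℂ :=
  (1 / 2) * (fderiv ℝ f z (Pi.single k 1) - Complex.I * fderiv ℝ f z (Pi.single k Complex.I))

/-- Wirtinger derivative `∂f/∂z̄_k = (1/2)(∂f/∂x_k + i ∂f/∂y_k)`. -/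
def wirtBar (N : ℕ) (f : (Fin (N + 2) → ℂ) → ℂ) (z : Fin (N + 2) → ℂ) (k : Fin (N + 2)) : ℂ :=
  (1 / 2) * (fderiv ℝ f z (Pi.single k 1) + Complex.I * fderiv ℝ f z (Pi.single k Complex.I))


private lemma aux_g_neg {m x : ℝ} (hm0 : 0 < m) (hm1 : m < 1) (hx0 : 0 < x) (hx1 : x < 1) :
    (m-1)/2 * (1-x) - x + x ^ ((m+1)/2) < 0 := by
  set F : ℝ → ℝ := fun y => (m-1)/2 * (1-y) - y + y ^ ((m+1)/2) with hF
  have hder : ∀ y ∈ Set.Ioo x 1, HasDerivAt F (-((m-1)/2) - 1 + (m+1)/2 * y ^ ((m+1)/2 - 1)) y := by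
    intro y hy
    have hy0 : 0 < y := hx0.trans hy.1
    have h1 : HasDerivAt (fun y : ℝ => y ^ ((m+1)/2)) ((m+1)/2 * y ^ ((m+1)/2 - 1)) y :=
      Real.hasDerivAt_rpow_const (Or.inl hy0.ne')
    have h2 : HasDerivAt (fun y : ℝ => (m-1)/2 * (1-y) - y) (-((m-1)/2) - 1) y := by
      have := (((hasDerivAt_id y).const_sub 1).const_mul ((m-1)/2)).sub (hasDerivAt_id y)
      exact this.congr_deriv (by ring)
    exact h2.add h1
  have hderpos : ∀ y ∈ Set.Ioo x 1, 0 < -((m-1)/2) - 1 + (m+1)/2 * y ^ ((m+1)/2 - 1) := by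
    intro y hy
    have hy0 : 0 < y := hx0.trans hy.1
    have hexp : (m+1)/2 - 1 = (m-1)/2 := by ring
    have h1 : (1:ℝ) < y ^ ((m-1)/2) := by
      rw [Real.one_lt_rpow_iff_of_pos hy0]
      right; exact ⟨hy.2, by linarith⟩
    rw [hexp]
    nlinarith
  have hcont : ContinuousOn F (Set.Icc x 1) := by
    intro y hy
    have hy0 : 0 < y := lt_of_lt_of_le hx0 hy.1
    have h1 : HasDerivAt (fun y : ℝ => y ^ ((m+1)/2)) ((m+1)/2 * y ^ ((m+1)/2 - 1)) y :=
      Real.hasDerivAt_rpow_const (Or.inl hy0.ne')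
    exact ((((continuous_const.mul (continuous_const.sub continuous_id)).sub
      continuous_id).continuousAt.add h1.continuousAt)).continuousWithinAt
  have hmono : StrictMonoOn F (Set.Icc x 1) := by
    apply strictMonoOn_of_deriv_pos (convex_Icc x 1) hcont
    intro y hy
    rw [interior_Icc] at hy
    rw [(hder y hy).deriv]
    exact hderpos y hy
  have hFx : F x < F 1 := hmono ⟨le_rfl, hx1.le⟩ ⟨hx1.le, le_rfl⟩ hx1
  have hF1 : F 1 = 0 := by simp [hF]
  simpa [hF1] using hFx

private lemma key_ineq {m u : ℝ} (hm0 : 0 < m) (hm1 : m < 1) (hu0 : 0 < u) (hu1 : u < 1) :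
    1 - u ^ m < m * u ^ ((m-1)/2) * (1 - u) := by
  set G : ℝ → ℝ := fun y => m * y ^ ((m-1)/2) * (1-y) + y ^ m with hG
  have hder : ∀ y ∈ Set.Ioo u 1, HasDerivAt G
      (m * ((m-1)/2 * y ^ ((m-1)/2 - 1)) * (1-y) + m * y ^ ((m-1)/2) * (-1) + m * y ^ (m-1)) y := by
    intro y hy
    have hy0 : 0 < y := hu0.trans hy.1
    have h1 : HasDerivAt (fun y : ℝ => y ^ ((m-1)/2)) ((m-1)/2 * y ^ ((m-1)/2 - 1)) y :=
      Real.hasDerivAt_rpow_const (Or.inl hy0.ne')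
    have h2 : HasDerivAt (fun y : ℝ => 1 - y) (-1) y := by
      simpa using (hasDerivAt_id y).const_sub 1
    have h3 : HasDerivAt (fun y : ℝ => y ^ m) (m * y ^ (m-1)) y :=
      Real.hasDerivAt_rpow_const (Or.inl hy0.ne')
    have h4 := ((h1.const_mul m).mul h2).add h3
    exact h4
  have hderneg : ∀ y ∈ Set.Ioo u 1,
      m * ((m-1)/2 * y ^ ((m-1)/2 - 1)) * (1-y) + m * y ^ ((m-1)/2) * (-1) + m * y ^ (m-1) < 0 := by
    intro y hy
    have hy0 : 0 < y := hu0.trans hy.1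
    have e1 : y ^ ((m-1)/2 - 1) = y ^ ((m-3)/2) := by
      rw [show (m-1)/2 - 1 = (m-3)/2 by ring]
    have e2 : y ^ ((m-1)/2) = y ^ ((m-3)/2) * y := by
      rw [show (m-1)/2 = (m-3)/2 + 1 by ring, Real.rpow_add hy0, Real.rpow_one]
    have e3 : y ^ (m-1) = y ^ ((m-3)/2) * y ^ ((m+1)/2) := by
      rw [show m-1 = (m-3)/2 + (m+1)/2 by ring, Real.rpow_add hy0]
    have hg := aux_g_neg hm0 hm1 hy0 hy.2
    have hyp : 0 < y ^ ((m-3)/2) := Real.rpow_pos_of_pos hy0 _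
    calc m * ((m-1)/2 * y ^ ((m-1)/2 - 1)) * (1-y) + m * y ^ ((m-1)/2) * (-1) + m * y ^ (m-1)
        = m * y ^ ((m-3)/2) * ((m-1)/2 * (1-y) - y + y ^ ((m+1)/2)) := by
          rw [e1, e2, e3]; ring
      _ < 0 := by
          apply mul_neg_of_pos_of_neg (by positivity) hg
  have hcont : ContinuousOn G (Set.Icc u 1) := by
    intro y hy
    have hy0 : 0 < y := lt_of_lt_of_le hu0 hy.1
    have h1 : ContinuousAt (fun y : ℝ => y ^ ((m-1)/2)) y :=
      (Real.hasDerivAt_rpow_const (p := (m-1)/2) (Or.inl hy0.ne')).continuousAt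
    have h3 : ContinuousAt (fun y : ℝ => y ^ m) y :=
      (Real.hasDerivAt_rpow_const (p := m) (Or.inl hy0.ne')).continuousAt
    exact (((continuousAt_const.mul h1).mul (continuous_const.sub continuous_id).continuousAt).add
      h3).continuousWithinAt
  have hmono : StrictAntiOn G (Set.Icc u 1) := by
    apply strictAntiOn_of_deriv_neg (convex_Icc u 1) hcont
    intro y hy
    rw [interior_Icc] at hy
    rw [(hder y hy).deriv]
    exact hderneg y hy
  have hGu : G 1 < G u := hmono ⟨le_rfl, hu1.le⟩ ⟨hu1.le, le_rfl⟩ hu1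
  have hG1 : G 1 = 1 := by simp [hG]
  rw [hG1] at hGu
  simp only [hG] at hGu
  linarith

private lemma key_sq {m u : ℝ} (hm0 : 0 < m) (hm1 : m < 1) (hu0 : 0 < u) (hu1 : u < 1) :
    (1 - u ^ m) ^ 2 < m ^ 2 * u ^ (m-1) * (1 - u) ^ 2 := by
  have h := key_ineq hm0 hm1 hu0 hu1
  have ha : 0 ≤ 1 - u ^ m := by
    have : u ^ m < 1 := by
      calc u ^ m < 1 ^ m := Real.rpow_lt_rpow hu0.le hu1 hm0
        _ = 1 := Real.one_rpow m
    linarith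
  have h2 := mul_self_lt_mul_self ha h
  have e : m * u ^ ((m-1)/2) * (1-u) * (m * u ^ ((m-1)/2) * (1-u))
      = m ^ 2 * u ^ (m-1) * (1-u) ^ 2 := by
    have h3 : u ^ ((m-1)/2) * u ^ ((m-1)/2) = u ^ (m-1) := by
      rw [← Real.rpow_add hu0, show (m-1)/2 + (m-1)/2 = m-1 by ring]
    rw [← h3]; ring
  rw [← e, pow_two]
  exact h2

private lemma main_real {m t s A : ℝ} (hm0 : 0 < m) (hm1 : m < 1) (ht : 0 < t)
    (hs : 0 ≤ s) (htmA : t ^ m < A) :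
    s * (A ^ (1/m) * (A ^ (1/m) + t)) / (A ^ 2 * (m ^ 2 * (A ^ (1/m) - t) ^ 3))
      + (A + s) * (m * t ^ (m - 1)) / (A * (A - t ^ m) ^ 2)
    ≠ A ^ (1/m) / (A * (m * (A ^ (1/m) - t) ^ 2))
      - s * ((1/m - 1) * A ^ (1/m) / (A ^ 2 * (m * (A ^ (1/m) - t) ^ 2))
        - 2 * (A ^ (1/m)) ^ 2 / (A ^ 2 * (m ^ 2 * (A ^ (1/m) - t) ^ 3))) := by
  have hA : 0 < A := (Real.rpow_pos_of_pos ht m).trans htmA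
  set P := A ^ (1/m) with hP
  have hP0 : 0 < P := Real.rpow_pos_of_pos hA _
  have hPm : P ^ m = A := by
    rw [hP, ← Real.rpow_mul hA.le, one_div_mul_cancel hm0.ne', Real.rpow_one]
  have htP : t < P := by
    have h1 : (t ^ m) ^ (1/m) < A ^ (1/m) :=
      Real.rpow_lt_rpow (Real.rpow_nonneg ht.le m) htmA (by positivity)
    rwa [← Real.rpow_mul ht.le, mul_one_div_cancel hm0.ne', Real.rpow_one] at h1
  set u := t / P with hu
  have hu0 : 0 < u := div_pos ht hP0
  have hu1 : u < 1 := (div_lt_one hP0).mpr htP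
  have hum : u ^ m = t ^ m / A := by
    rw [hu, Real.div_rpow ht.le hP0.le, hPm]
  have hum1 : u ^ (m-1) = t ^ (m-1) * P / A := by
    rw [hu, Real.div_rpow ht.le hP0.le, Real.rpow_sub hP0, hPm, Real.rpow_one,
      Real.rpow_sub ht, Real.rpow_one]
    field_simp
  have hu1u : 1 - u = (P - t) / P := by rw [hu]; field_simp
  have key := key_sq hm0 hm1 hu0 hu1
  rw [hum, hum1, hu1u] at key
  set D := P - t with hD
  set E := A - t ^ m with hE
  have hD0 : 0 < D := by simp [hD]; linarith
  have hE0 : 0 < E := by simp [hE]; linarith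
  have hEA : 1 - t ^ m / A = E / A := by field_simp; exact hE.symm
  rw [hEA] at key
  -- key : (E/A)^2 < m^2 * (t^(m-1)*P/A) * (D/P)^2
  have key2 : P * E ^ 2 < m ^ 2 * t ^ (m-1) * D ^ 2 * A := by
    have h2 : (E/A)^2 * (A^2 * P) < m^2 * (t^(m-1)*P/A) * (D/P)^2 * (A^2 * P) := by
      apply mul_lt_mul_of_pos_right key (by positivity)
    calc P * E ^ 2 = (E/A)^2 * (A^2 * P) := by field_simp
      _ < m^2 * (t^(m-1)*P/A) * (D/P)^2 * (A^2 * P) := h2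
      _ = m ^ 2 * t ^ (m-1) * D ^ 2 * A := by field_simp
  have htm1 : 0 < t ^ (m-1) := Real.rpow_pos_of_pos ht _
  intro hcontra
  have hdiff : s * (P * (P + t)) / (A ^ 2 * (m ^ 2 * D ^ 3))
      + (A + s) * (m * t ^ (m - 1)) / (A * E ^ 2)
      - (P / (A * (m * D ^ 2))
      - s * ((1/m - 1) * P / (A ^ 2 * (m * D ^ 2))
        - 2 * P ^ 2 / (A ^ 2 * (m ^ 2 * D ^ 3))))
      = (A + s) * ((m ^ 2 * t ^ (m-1) * D ^ 2 * A - P * E ^ 2) / (A ^ 2 * m * D ^ 2 * E ^ 2)) := by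
    field_simp
    ring
  rw [hcontra] at hdiff
  simp only [sub_self] at hdiff
  have hpos : 0 < (A + s) * ((m ^ 2 * t ^ (m-1) * D ^ 2 * A - P * E ^ 2) / (A ^ 2 * m * D ^ 2 * E ^ 2)) := by
    apply mul_pos (by linarith)
    apply div_pos (by linarith) (by positivity)
  rw [← hdiff] at hpos
  exact lt_irrefl 0 hpos

/-- auxiliary: sum of `normSq` over nonzero coordinates -/
def SS (N : ℕ) (u : Fin (N + 2) → ℂ) : ℝ :=
  ∑ l ∈ Finset.Ioi (0 : Fin (N + 2)), Complex.normSq (u l)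

/-- auxiliary: real part of the diagonal `(1,1)` entry -/
def phi1 (N : ℕ) (m : ℝ) (u : Fin (N + 2) → ℂ) : ℝ :=
  (1 - SS N u) ^ (-2 + 1 / m) * Complex.normSq (u 0) * Complex.normSq (u 1) /
      (m ^ 2 * ((1 - SS N u) ^ (1 / m) - Complex.normSq (u 0)) ^ 2) +
    ((1 - SS N u) + Complex.normSq (u 1)) /
      ((1 - SS N u) * ((1 - SS N u) - Complex.normSq (u 0) ^ m))

/-- auxiliary: real coefficient of the `(0,1)` entry -/
def gco (N : ℕ) (m : ℝ) (u : Fin (N + 2) → ℂ) : ℝ :=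
  (1 - SS N u) ^ (-1 + 1 / m) /
    (m * ((1 - SS N u) ^ (1 / m) - Complex.normSq (u 0)) ^ 2)

lemma abs_two_mul (m : ℝ) (w : ℂ) : ‖w‖ ^ (2 * m) = Complex.normSq w ^ m := by
  rw [Real.rpow_mul (norm_nonneg w), show ((2:ℝ)) = ((2:ℕ):ℝ) by norm_num,
    Real.rpow_natCast, Complex.sq_norm]

lemma fin_one_ne_zero (N : ℕ) : (1 : Fin (N + 2)) ≠ 0 := by
  intro h
  have := congrArg Fin.val h
  simp [Fin.val_one] at this

lemma f1_eq (N : ℕ) (m : ℝ) : (fun u : Fin (N+2) → ℂ => hEnt N m u 1 1)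
    = fun u => ((phi1 N m u : ℝ) : ℂ) := by
  funext u
  simp only [hEnt, if_neg (fin_one_ne_zero N), if_pos rfl, Complex.sq_norm, abs_two_mul,
    phi1, SS]
  rw [if_pos trivial]

lemma f2_eq (N : ℕ) (m : ℝ) : (fun u : Fin (N+2) → ℂ => hEnt N m u 0 1)
    = fun u => ((gco N m u : ℝ) : ℂ) * (starRingEnd ℂ) (u 0) * u 1 := by
  funext u
  simp only [hEnt, if_pos rfl, if_neg (fin_one_ne_zero N), Complex.sq_norm, gco, SS]
  rw [if_pos trivial]

private lemma raw_id1 (m t s A P X Y d : ℝ) (hm : m ≠ 0) (hA : A ≠ 0) (hD : P - t ≠ 0)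
    (hE : A - Y ≠ 0) :
    P / A ^ 2 * t * s * (-((m ^ 2 * (P - t) ^ 2) ^ 2)⁻¹
        * (m ^ 2 * (((2:ℕ):ℝ) * (P - t) ^ (2 - 1) * -d))) +
        (m ^ 2 * (P - t) ^ 2)⁻¹ * (s * (P / A ^ 2 * d)) +
      (A + s) * (-((A * (A - Y)) ^ 2)⁻¹ * (A * -(m * X * d))) =
    (s * (P * (P + t)) / (A ^ 2 * (m ^ 2 * (P - t) ^ 3))
      + (A + s) * (m * X) / (A * (A - Y) ^ 2)) * d := by
  norm_num
  field_simp
  ring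

open ContinuousLinearMap in
/-- derivative of the `l`-th coordinate `normSq` -/
def dq (N : ℕ) (z : Fin (N + 2) → ℂ) (l : Fin (N + 2)) : (Fin (N + 2) → ℂ) →L[ℝ] ℝ :=
  ((2 * (z l).re) • Complex.reCLM + (2 * (z l).im) • Complex.imCLM).comp
    (ContinuousLinearMap.proj (R := ℝ) l)

lemma hasFDerivAt_nsq (w : ℂ) :
    HasFDerivAt Complex.normSq
      ((2 * w.re) • Complex.reCLM + (2 * w.im) • Complex.imCLM) w := by
  have h := ((Complex.reCLM.hasFDerivAt (x := w)).mul (Complex.reCLM.hasFDerivAt (x := w))).add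
    ((Complex.imCLM.hasFDerivAt (x := w)).mul (Complex.imCLM.hasFDerivAt (x := w)))
  have h2 : (fun y : ℂ => Complex.reCLM y * Complex.reCLM y + Complex.imCLM y * Complex.imCLM y)
      = Complex.normSq := by
    funext y; simp [Complex.normSq_apply]
  simp only [Pi.mul_def, Pi.add_def] at h
  rw [h2] at h
  refine h.congr_fderiv ?_
  ext v
  simp
  ring

lemma hq (N : ℕ) (z : Fin (N + 2) → ℂ) (l : Fin (N + 2)) :
    HasFDerivAt (fun u : Fin (N + 2) → ℂ => Complex.normSq (u l)) (dq N z l) z :=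
  (hasFDerivAt_nsq (z l)).comp z (hasFDerivAt_apply l z)

lemma dq_single (N : ℕ) (z : Fin (N + 2) → ℂ) (l k : Fin (N + 2)) (c : ℂ) :
    dq N z l (Pi.single k c) = if l = k then 2 * ((starRingEnd ℂ) (z l) * c).re else 0 := by
  rcases eq_or_ne l k with rfl | h
  · simp [dq, Complex.mul_re]; ring
  · simp [dq, Pi.single_apply, h]

/-- the cleaned-up coefficient for `∂ h_{1 1̄} / ∂ z_0` -/
def C1 (N : ℕ) (m : ℝ) (z : Fin (N + 2) → ℂ) : ℝ :=
  Complex.normSq (z 1) * ((1 - SS N z) ^ (1/m) * ((1 - SS N z) ^ (1/m) + Complex.normSq (z 0))) /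
      ((1 - SS N z) ^ 2 * (m ^ 2 * ((1 - SS N z) ^ (1/m) - Complex.normSq (z 0)) ^ 3))
    + ((1 - SS N z) + Complex.normSq (z 1)) * (m * Complex.normSq (z 0) ^ (m - 1)) /
      ((1 - SS N z) * ((1 - SS N z) - Complex.normSq (z 0) ^ m) ^ 2)

section
variable (N : ℕ) (m : ℝ) (z : Fin (N + 2) → ℂ)

lemma wirt1_val (hm0 : 0 < m)
    (ht0 : 0 < Complex.normSq (z 0)) (hA0 : 0 < 1 - SS N z)
    (hD0 : (1 - SS N z) ^ (1/m) - Complex.normSq (z 0) ≠ 0)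
    (hE0 : (1 - SS N z) - Complex.normSq (z 0) ^ m ≠ 0) (c : ℂ) :
    fderiv ℝ (fun u => ((phi1 N m u : ℝ) : ℂ)) z (Pi.single 0 c)
      = ((C1 N m z * (2 * ((starRingEnd ℂ) (z 0) * c).re) : ℝ) : ℂ) := by
  have hS : HasFDerivAt (fun u : Fin (N + 2) → ℂ => SS N u)
      (∑ l ∈ Finset.Ioi (0 : Fin (N + 2)), dq N z l) z := by
    unfold SS
    exact HasFDerivAt.fun_sum fun l _ => hq N z l
  have hA := hS.const_sub 1
  -- A ^ (-2 + 1/m)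
  have hA2m := (Real.hasDerivAt_rpow_const (p := -2 + 1/m)
    (Or.inl hA0.ne')).comp_hasFDerivAt z hA
  -- B = A ^ (1/m)
  have hB := (Real.hasDerivAt_rpow_const (p := 1/m)
    (Or.inl hA0.ne')).comp_hasFDerivAt z hA
  -- t ^ m
  have htm := (Real.hasDerivAt_rpow_const (p := m)
    (Or.inl ht0.ne')).comp_hasFDerivAt z (hq N z 0)
  -- numerator 1
  have hnum1 := (hA2m.mul (hq N z 0)).mul (hq N z 1)
  -- D, D^2, denominator 1
  have hD := hB.sub (hq N z 0)
  have hD2 := (hasDerivAt_pow 2 _).comp_hasFDerivAt z hD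
  have hden1 := hD2.const_mul (m ^ 2)
  have hden1inv := (hasDerivAt_inv (by positivity : m ^ 2 * ((1 - SS N z) ^ (1/m)
      - Complex.normSq (z 0)) ^ 2 ≠ 0)).comp_hasFDerivAt z hden1
  have hfrac1 := hnum1.mul hden1inv
  -- second fraction
  have hnum2 := hA.add (hq N z 1)
  have hE := hA.sub htm
  have hden2 := hA.mul hE
  have hden2inv := (hasDerivAt_inv (mul_ne_zero hA0.ne' hE0)).comp_hasFDerivAt z hden2
  have hfrac2 := hnum2.mul hden2inv
  have hphi := hfrac1.add hfrac2
  have hphiC := Complex.ofRealCLM.hasFDerivAt.comp z hphi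
  have hfun : (fun u => ((phi1 N m u : ℝ) : ℂ))
      = (fun u => Complex.ofRealCLM ((((1 - SS N u) ^ (-2 + 1/m) * Complex.normSq (u 0)
          * Complex.normSq (u 1)) * (m ^ 2 * ((1 - SS N u) ^ (1/m) - Complex.normSq (u 0)) ^ 2)⁻¹
        + ((1 - SS N u) + Complex.normSq (u 1))
          * ((1 - SS N u) * ((1 - SS N u) - Complex.normSq (u 0) ^ m))⁻¹))) := by
    funext u
    simp only [phi1, Complex.ofRealCLM_apply, div_eq_mul_inv]
  rw [hfun]
  simp only [Function.comp_def, Pi.mul_def, Pi.add_def, Pi.sub_def] at hphiC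
  rw [hphiC.fderiv]
  simp only [ContinuousLinearMap.coe_comp', Function.comp_apply,
    ContinuousLinearMap.add_apply, ContinuousLinearMap.coe_smul', Pi.smul_apply,
    ContinuousLinearMap.neg_apply, ContinuousLinearMap.coe_sum', Finset.sum_apply,
    ContinuousLinearMap.smul_apply, dq_single, Finset.sum_ite_eq', Finset.mem_Ioi,
    ContinuousLinearMap.sub_apply, smul_eq_mul, Complex.ofRealCLM_apply, lt_self_iff_false,
    if_false]
  simp only [if_pos trivial, if_neg (fin_one_ne_zero N), neg_zero, mul_zero, zero_sub,
    sub_zero, add_zero, zero_add, pow_one]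
  rw [Complex.ofReal_inj]
  simp only [C1]
  have e1 : (1 - SS N z) ^ (-2 + 1/m) = (1 - SS N z) ^ (1/m) / (1 - SS N z) ^ 2 := by
    rw [Real.rpow_add hA0, show ((-2:ℝ)) = -((2:ℕ):ℝ) by norm_num, Real.rpow_neg hA0.le,
      Real.rpow_natCast]
    ring
  rw [e1]
  set A := 1 - SS N z with hA'
  set t := Complex.normSq (z 0)
  set s := Complex.normSq (z 1)
  set δ := 2 * ((starRingEnd ℂ) (z 0) * c).re
  set P := A ^ (1/m) with hP'
  have hAne : A ≠ 0 := ne_of_gt hA0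
  have hmne : m ≠ 0 := hm0.ne'
  exact raw_id1 m t s A P (t^(m-1)) (t^m) δ hmne hAne hD0 hE0

end

def KK (N : ℕ) (m : ℝ) (z : Fin (N + 2) → ℂ) : ℝ :=
  (1/m - 1) * (1 - SS N z) ^ (1/m) /
      ((1 - SS N z) ^ 2 * (m * ((1 - SS N z) ^ (1/m) - Complex.normSq (z 0)) ^ 2))
    - 2 * ((1 - SS N z) ^ (1/m)) ^ 2 /
      ((1 - SS N z) ^ 2 * (m ^ 2 * ((1 - SS N z) ^ (1/m) - Complex.normSq (z 0)) ^ 3))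

section
variable (N : ℕ) (m : ℝ) (z : Fin (N + 2) → ℂ)

set_option maxHeartbeats 1000000 in
lemma wirt2_val (hm0 : 0 < m)
    (ht0 : 0 < Complex.normSq (z 0)) (hA0 : 0 < 1 - SS N z)
    (hD0 : (1 - SS N z) ^ (1/m) - Complex.normSq (z 0) ≠ 0) (c : ℂ) :
    fderiv ℝ (fun u => ((gco N m u : ℝ) : ℂ) * (starRingEnd ℂ) (u 0) * u 1) z (Pi.single 1 c)
      = ((gco N m z : ℝ) : ℂ) * (starRingEnd ℂ) (z 0) * c
        - ((KK N m z * (2 * ((starRingEnd ℂ) (z 1) * c).re) : ℝ) : ℂ)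
          * ((starRingEnd ℂ) (z 0) * z 1) := by
  have hS : HasFDerivAt (fun u : Fin (N + 2) → ℂ => SS N u)
      (∑ l ∈ Finset.Ioi (0 : Fin (N + 2)), dq N z l) z := by
    unfold SS
    exact HasFDerivAt.fun_sum fun l _ => hq N z l
  have hA := hS.const_sub 1
  have hA1m := (Real.hasDerivAt_rpow_const (p := -1 + 1/m)
    (Or.inl hA0.ne')).comp_hasFDerivAt z hA
  have hB := (Real.hasDerivAt_rpow_const (p := 1/m)
    (Or.inl hA0.ne')).comp_hasFDerivAt z hA
  have hD := hB.sub (hq N z 0)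
  have hD2 := (hasDerivAt_pow 2 _).comp_hasFDerivAt z hD
  have hden := hD2.const_mul m
  have hdeninv := (hasDerivAt_inv (mul_ne_zero hm0.ne' (pow_ne_zero 2 hD0))).comp_hasFDerivAt
    z hden
  have hg := hA1m.mul hdeninv
  have hgC := Complex.ofRealCLM.hasFDerivAt.comp z hg
  have hconj : HasFDerivAt (fun u : Fin (N + 2) → ℂ => (starRingEnd ℂ) (u 0))
      (Complex.conjCLE.toContinuousLinearMap.comp (ContinuousLinearMap.proj 0)) z := by
    have h0 := Complex.conjCLE.toContinuousLinearMap.hasFDerivAt.comp z (hasFDerivAt_apply 0 z)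
    simpa [Function.comp_def] using h0
  have hu1 := hasFDerivAt_apply (𝕜 := ℝ) 1 z
  have H := (hgC.mul hconj).mul hu1
  have hfun : (fun u => ((gco N m u : ℝ) : ℂ) * (starRingEnd ℂ) (u 0) * u 1)
      = (fun u => (Complex.ofRealCLM ((((1 - SS N u) ^ (-1 + 1/m))
          * (m * ((1 - SS N u) ^ (1/m) - Complex.normSq (u 0)) ^ 2)⁻¹)))
        * (starRingEnd ℂ) (u 0) * u 1) := by
    funext u
    simp only [gco, Complex.ofRealCLM_apply, div_eq_mul_inv]
  rw [hfun]
  simp only [Function.comp_def, Pi.mul_def, Pi.add_def, Pi.sub_def] at H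
  rw [H.fderiv]
  simp only [ContinuousLinearMap.coe_comp', Function.comp_apply,
    ContinuousLinearMap.add_apply, ContinuousLinearMap.coe_smul', Pi.smul_apply,
    ContinuousLinearMap.neg_apply, ContinuousLinearMap.coe_sum', Finset.sum_apply,
    ContinuousLinearMap.smul_apply, dq_single, Finset.sum_ite_eq', Finset.mem_Ioi,
    ContinuousLinearMap.sub_apply, smul_eq_mul, Complex.ofRealCLM_apply,
    ContinuousLinearMap.proj_apply, ContinuousLinearEquiv.coe_coe, Complex.conjCLE_apply,
    Pi.single_eq_same, lt_self_iff_false, if_false]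
  have h01 : (0 : Fin (N + 2)) < 1 := by
    rw [Fin.lt_def]
    norm_num
  have h01' : (0 : Fin (N + 2)) ≠ 1 := ne_of_lt h01
  simp only [if_pos h01, if_neg h01', Pi.single_eq_of_ne h01', map_zero, mul_zero, zero_add,
    sub_zero, pow_one]
  have e_a : (1 - SS N z) ^ (-1 + 1/m) = (1 - SS N z) ^ (1/m) / (1 - SS N z) := by
    rw [show -1 + 1/m = 1/m - 1 by ring, Real.rpow_sub hA0, Real.rpow_one]
  have e_b : (1 - SS N z) ^ (1/m - 1) = (1 - SS N z) ^ (1/m) / (1 - SS N z) := by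
    rw [Real.rpow_sub hA0, Real.rpow_one]
  have e_c : (1 - SS N z) ^ (-1 + 1/m - 1) = (1 - SS N z) ^ (1/m) / (1 - SS N z) ^ 2 := by
    rw [show -1 + 1/m - 1 = 1/m - 2 by ring, Real.rpow_sub hA0,
      show (2:ℝ) = ((2:ℕ):ℝ) by norm_num, Real.rpow_natCast]
  have hAne : (1 - SS N z) ≠ 0 := ne_of_gt hA0
  have hmne : m ≠ 0 := hm0.ne'
  have hR : (1 - SS N z) ^ (-1 + 1 / m) *
        (-((m * ((1 - SS N z) ^ (1 / m) - Complex.normSq (z 0)) ^ 2) ^ 2)⁻¹ *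
          (m * (((2:ℕ):ℝ) * ((1 - SS N z) ^ (1 / m) - Complex.normSq (z 0)) ^ (2 - 1) *
            (1 / m * (1 - SS N z) ^ (1 / m - 1) * -(2 * ((starRingEnd ℂ) (z 1) * c).re))))) +
      (m * ((1 - SS N z) ^ (1 / m) - Complex.normSq (z 0)) ^ 2)⁻¹ *
        ((-1 + 1 / m) * (1 - SS N z) ^ (-1 + 1 / m - 1) * -(2 * ((starRingEnd ℂ) (z 1) * c).re))
      = -(KK N m z * (2 * ((starRingEnd ℂ) (z 1) * c).re)) := by
    rw [e_a, e_b, e_c]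
    simp only [KK]
    field_simp
    ring
  rw [hR, sub_eq_add_neg]
  simp only [gco, div_eq_mul_inv]
  push_cast
  ring

end


section
variable (N : ℕ) (m : ℝ) (z : Fin (N + 2) → ℂ)

lemma assemble1 (cc : ℝ) (w : ℂ) :
    (1/2 : ℂ) * (((cc * (2 * ((starRingEnd ℂ) w * 1).re) : ℝ) : ℂ)
      - Complex.I * ((cc * (2 * ((starRingEnd ℂ) w * Complex.I).re) : ℝ) : ℂ))
    = (starRingEnd ℂ) w * ((cc : ℝ) : ℂ) := by
  apply Complex.ext <;>
    simp [Complex.mul_re, Complex.mul_im] <;> ring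

lemma assemble2 (g k : ℝ) (w w1 : ℂ) :
    (1/2 : ℂ) * ((((g:ℝ):ℂ) * (starRingEnd ℂ) w * 1
        - ((k * (2*(((starRingEnd ℂ) w1)*1).re) : ℝ):ℂ) * ((starRingEnd ℂ) w * w1))
      - Complex.I * (((g:ℝ):ℂ) * (starRingEnd ℂ) w * Complex.I
        - ((k * (2*(((starRingEnd ℂ) w1)*Complex.I).re) : ℝ):ℂ) * ((starRingEnd ℂ) w * w1)))
    = (starRingEnd ℂ) w * (((g - Complex.normSq w1 * k : ℝ)):ℂ) := by
  apply Complex.ext <;>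
    simp [Complex.mul_re, Complex.mul_im, Complex.normSq_apply] <;> ring

lemma wirt_one (hm0 : 0 < m)
    (ht0 : 0 < Complex.normSq (z 0)) (hA0 : 0 < 1 - SS N z)
    (hD0 : (1 - SS N z) ^ (1/m) - Complex.normSq (z 0) ≠ 0)
    (hE0 : (1 - SS N z) - Complex.normSq (z 0) ^ m ≠ 0) :
    wirt N (fun u => hEnt N m u 1 1) z 0
      = (starRingEnd ℂ) (z 0) * ((C1 N m z : ℝ) : ℂ) := by
  rw [f1_eq N m]
  simp only [wirt]
  rw [wirt1_val N m z hm0 ht0 hA0 hD0 hE0 1, wirt1_val N m z hm0 ht0 hA0 hD0 hE0 Complex.I]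
  exact assemble1 _ _

lemma wirt_two (hm0 : 0 < m)
    (ht0 : 0 < Complex.normSq (z 0)) (hA0 : 0 < 1 - SS N z)
    (hD0 : (1 - SS N z) ^ (1/m) - Complex.normSq (z 0) ≠ 0) :
    wirt N (fun u => hEnt N m u 0 1) z 1
      = (starRingEnd ℂ) (z 0)
          * ((gco N m z - Complex.normSq (z 1) * KK N m z : ℝ) : ℂ) := by
  rw [f2_eq N m]
  simp only [wirt]
  rw [wirt2_val N m z hm0 ht0 hA0 hD0 1, wirt2_val N m z hm0 ht0 hA0 hD0 Complex.I]
  exact assemble2 _ _ _ _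

end

/-- At every point of the dense open set `E_{2m} \ Z` the Wu metric `h` fails the Kähler
symmetry condition: there are indices `i, j, k` with
`∂h_{i j̄}/∂z_k ≠ ∂h_{k j̄}/∂z_i` (Wirtinger derivatives). Hence the Wu metric on
`E_{2m}` is nowhere Kähler. -/
theorem statement16 (N : ℕ) (m : ℝ) (hm0 : 0 < m) (hm : m < 1 / 2)
    (z : Fin (N + 2) → ℂ) (hz : z ∈ E2m N m) (hz0 : z 0 ≠ 0) :
    ∃ i j k : Fin (N + 2),
      wirt N (fun u => hEnt N m u i j) z k ≠ wirt N (fun u => hEnt N m u k j) z i := by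
  refine ⟨1, 1, 0, ?_⟩
  have hm1 : m < 1 := by linarith
  have ht0 : 0 < Complex.normSq (z 0) := Complex.normSq_pos.mpr hz0
  have hzmem : ‖z 0‖ ^ (2 * m)
      + ∑ j ∈ Finset.Ioi (0 : Fin (N + 2)), ‖z j‖ ^ 2 < 1 := hz
  rw [abs_two_mul] at hzmem
  have hsum : ∑ j ∈ Finset.Ioi (0 : Fin (N + 2)), ‖z j‖ ^ 2 = SS N z := by
    simp only [SS, Complex.sq_norm]
  rw [hsum] at hzmem
  have htmA : Complex.normSq (z 0) ^ m < 1 - SS N z := by linarith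
  have hA0 : 0 < 1 - SS N z := (Real.rpow_pos_of_pos ht0 m).trans htmA
  have htP : Complex.normSq (z 0) < (1 - SS N z) ^ (1/m) := by
    have h1 : (Complex.normSq (z 0) ^ m) ^ (1/m) < (1 - SS N z) ^ (1/m) :=
      Real.rpow_lt_rpow (Real.rpow_nonneg ht0.le m) htmA (by positivity)
    rwa [← Real.rpow_mul ht0.le, mul_one_div_cancel hm0.ne', Real.rpow_one] at h1
  have hD0 : (1 - SS N z) ^ (1/m) - Complex.normSq (z 0) ≠ 0 :=
    ne_of_gt (sub_pos.mpr htP)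
  have hE0 : (1 - SS N z) - Complex.normSq (z 0) ^ m ≠ 0 :=
    ne_of_gt (sub_pos.mpr htmA)
  rw [wirt_one N m z hm0 ht0 hA0 hD0 hE0, wirt_two N m z hm0 ht0 hA0 hD0]
  have hconj0 : (starRingEnd ℂ) (z 0) ≠ 0 := by
    simpa using hz0
  have hgco_eq : gco N m z = (1 - SS N z) ^ (1/m)
      / ((1 - SS N z) * (m * ((1 - SS N z) ^ (1/m) - Complex.normSq (z 0)) ^ 2)) := by
    rw [gco, show (1 - SS N z) ^ (-1 + 1/m)
        = (1 - SS N z) ^ (1/m) / (1 - SS N z) from by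
      rw [show -1 + 1/m = 1/m - 1 by ring, Real.rpow_sub hA0, Real.rpow_one],
      div_div]
  have hne := main_real hm0 hm1 ht0 (Complex.normSq_nonneg (z 1)) htmA
  intro hEq
  apply hne
  have hC : C1 N m z = gco N m z - Complex.normSq (z 1) * KK N m z :=
    Complex.ofReal_inj.mp (mul_left_cancel₀ hconj0 hEq)
  calc Complex.normSq (z 1) * ((1 - SS N z) ^ (1/m) * ((1 - SS N z) ^ (1/m) + Complex.normSq (z 0))) /
        ((1 - SS N z) ^ 2 * (m ^ 2 * ((1 - SS N z) ^ (1/m) - Complex.normSq (z 0)) ^ 3))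
      + ((1 - SS N z) + Complex.normSq (z 1)) * (m * Complex.normSq (z 0) ^ (m - 1)) /
        ((1 - SS N z) * ((1 - SS N z) - Complex.normSq (z 0) ^ m) ^ 2)
      = C1 N m z := by rw [C1]
    _ = gco N m z - Complex.normSq (z 1) * KK N m z := hC
    _ = _ := by rw [hgco_eq, KK]
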